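/- Let r: I → ℝ be differentiable on an interval I and satisfy r′(t) = (2/√5)·(16r⁴ − 12r² + 1)·(1 − r²) for all t ∈ I, and suppose that 4r(t)² + 2r(t) − 1 ≠ 0 and r(t) ≠ 1 on I. Define G(t) = (4r² − 2r − 1)²(r + 1) / ((4r² + 2r − 1)²(r − 1)). Then G is differentiable and G′(t) = 4√5 · G(t) for all t ∈ I; consequently G(t) = G(t₀)·e^{4√5(t − t₀)} for any t₀, t ∈ I. -/

import Mathlib

/-- If `r′ = (2/√5)(16r⁴ − 12r² + 1)(1 − r²)` on an interval `I`, with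
`4r² + 2r − 1 ≠ 0` and `r ≠ 1` on `I`, then
`G = (4r² − 2r − 1)²(r + 1)/((4r² + 2r − 1)²(r − 1))` satisfies `G′ = 4√5·G`;
consequently `G(t) = G(t₀)·e^{4√5(t − t₀)}` for all `t₀, t ∈ I`. -/
theorem stmt17 (I : Set ℝ) (hI : I.OrdConnected) (r : ℝ → ℝ)
    (hr : ∀ t ∈ I, HasDerivAt r
      ((2 / Real.sqrt 5) * (16 * (r t) ^ 4 - 12 * (r t) ^ 2 + 1) * (1 - (r t) ^ 2)) t)
    (h1 : ∀ t ∈ I, 4 * (r t) ^ 2 + 2 * (r t) - 1 ≠ 0)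
    (h2 : ∀ t ∈ I, r t ≠ 1)
    (G : ℝ → ℝ)
    (hG : ∀ t, G t = (4 * (r t) ^ 2 - 2 * (r t) - 1) ^ 2 * (r t + 1)
      / ((4 * (r t) ^ 2 + 2 * (r t) - 1) ^ 2 * (r t - 1))) :
    (∀ t ∈ I, HasDerivAt G (4 * Real.sqrt 5 * G t) t) ∧
    (∀ t₀ ∈ I, ∀ t ∈ I, G t = G t₀ * Real.exp (4 * Real.sqrt 5 * (t - t₀))) := by
  have h5 : Real.sqrt 5 ^ 2 = 5 := Real.sq_sqrt (by norm_num)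
  have h5pos : (0:ℝ) < Real.sqrt 5 := Real.sqrt_pos.mpr (by norm_num)
  have hGfun : G = fun t => (4 * (r t) ^ 2 - 2 * (r t) - 1) ^ 2 * (r t + 1)
      / ((4 * (r t) ^ 2 + 2 * (r t) - 1) ^ 2 * (r t - 1)) := funext hG
  have key : ∀ t ∈ I, HasDerivAt G (4 * Real.sqrt 5 * G t) t := by
    intro t ht
    have h := hr t ht
    set d : ℝ := (2 / Real.sqrt 5) * (16 * (r t) ^ 4 - 12 * (r t) ^ 2 + 1) * (1 - (r t) ^ 2)
      with hd
    have ha : HasDerivAt (fun t => 4 * (r t) ^ 2 - 2 * (r t) - 1)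
        ((8 * r t - 2) * d) t := by
      have := (((h.pow 2).const_mul (4:ℝ)).sub (h.const_mul (2:ℝ))).sub_const 1
      exact this.congr_deriv (by ring)
    have hb : HasDerivAt (fun t => 4 * (r t) ^ 2 + 2 * (r t) - 1)
        ((8 * r t + 2) * d) t := by
      have := (((h.pow 2).const_mul (4:ℝ)).add (h.const_mul (2:ℝ))).sub_const 1
      exact this.congr_deriv (by ring)
    have hu : HasDerivAt (fun t => (4 * (r t) ^ 2 - 2 * (r t) - 1) ^ 2 * (r t + 1))
        ((2 * (4 * (r t) ^ 2 - 2 * (r t) - 1) * ((8 * r t - 2) * d)) * (r t + 1)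
          + (4 * (r t) ^ 2 - 2 * (r t) - 1) ^ 2 * d) t := by
      have := (ha.pow 2).mul (h.add_const 1)
      exact this.congr_deriv (by simp only [Pi.pow_apply]; ring)
    have hv : HasDerivAt (fun t => (4 * (r t) ^ 2 + 2 * (r t) - 1) ^ 2 * (r t - 1))
        ((2 * (4 * (r t) ^ 2 + 2 * (r t) - 1) * ((8 * r t + 2) * d)) * (r t - 1)
          + (4 * (r t) ^ 2 + 2 * (r t) - 1) ^ 2 * d) t := by
      have := (hb.pow 2).mul (h.sub_const 1)
      exact this.congr_deriv (by simp only [Pi.pow_apply]; ring)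
    have hb0 := h1 t ht
    have hr1 : r t - 1 ≠ 0 := sub_ne_zero.mpr (h2 t ht)
    have hv0 : (4 * (r t) ^ 2 + 2 * (r t) - 1) ^ 2 * (r t - 1) ≠ 0 :=
      mul_ne_zero (pow_ne_zero _ hb0) hr1
    have hdiv := hu.div hv hv0
    have h25 : (2:ℝ) / Real.sqrt 5 = 2 * Real.sqrt 5 / 5 := by
      rw [div_eq_div_iff h5pos.ne' (by norm_num)]; nlinarith [h5]
    rw [hGfun]
    refine hdiv.congr_deriv ?_
    rw [hd, h25]
    rw [div_eq_iff (pow_ne_zero 2 hv0)]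
    field_simp
    ring
  refine ⟨key, ?_⟩
  intro t₀ ht₀ t ht
  have hH : ∀ x ∈ I, HasFDerivWithinAt (fun x => G x * Real.exp (-(4 * Real.sqrt 5) * x))
      (0 : ℝ →L[ℝ] ℝ) I x := by
    intro x hx
    have := (key x hx).mul (((hasDerivAt_id x).const_mul (-(4 * Real.sqrt 5))).exp)
    have h0 : HasDerivAt (fun x => G x * Real.exp (-(4 * Real.sqrt 5) * x)) 0 x := by
      exact this.congr_deriv (by ring)
    exact h0.hasFDerivAt.hasFDerivWithinAt.congr_fderiv (by ext; simp)
  have hconv : Convex ℝ I := hI.convex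
  have hcst := hconv.norm_image_sub_le_of_norm_hasFDerivWithin_le (C := 0) hH
    (fun x _ => by simp) ht₀ ht
  simp only [Real.norm_eq_abs, zero_mul, abs_nonpos_iff, sub_eq_zero] at hcst
  have hexp : Real.exp (-(4 * Real.sqrt 5) * t) ≠ 0 := Real.exp_ne_zero _
  rw [show (4 * Real.sqrt 5 * (t - t₀)) = (-(4 * Real.sqrt 5) * t₀) - (-(4 * Real.sqrt 5) * t)
    by ring, Real.exp_sub]
  field_simp
  rw [neg_mul, neg_mul] at hcst
  linear_combination hcst
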